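/- arXiv:2309.04839 — 2 statements merged into one kernel-verified Lean document; each statement's English description precedes it below -/
import Mathlib

section
/- Let h : ℝⁿ → ℝ be differentiable, q : [0,∞) → ℝⁿ differentiable with q̇ = μ + d where ‖d(t)‖ ≤ D for all t, and let β, λ > 0. Define h̄(q,μ) = (∂h/∂q)·μ - (1/(2β))‖∂h/∂q‖² - βD²/2 + λh(q). If h̄(q(t), μ(t)) ≥ 0, then (d/dt)h(q(t)) + λ h(q(t)) ≥ 0. -/
open scoped RealInnerProductSpace

theorem stmt_10 (n : ℕ)
    (h : EuclideanSpace ℝ (Fin n) → ℝ) (hdiff : Differentiable ℝ h)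
    (q μ d : ℝ → EuclideanSpace ℝ (Fin n))
    (D β lam : ℝ) (hβ : 0 < β) (hlam : 0 < lam)
    (hq : ∀ t, HasDerivAt q (μ t + d t) t)
    (hd : ∀ t, ‖d t‖ ≤ D)
    (t : ℝ)
    (hbar : ⟪gradient h (q t), μ t⟫ - (1 / (2 * β)) * ‖gradient h (q t)‖ ^ 2
        - β * D ^ 2 / 2 + lam * h (q t) ≥ 0) :
    deriv (fun s => h (q s)) t + lam * h (q t) ≥ 0 := by
  have hF := (hdiff (q t)).hasFDerivAt
  have hc : HasDerivAt (fun s => h (q s)) (fderiv ℝ h (q t) (μ t + d t)) t :=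
    hF.comp_hasDerivAt t (hq t)
  have hgrad : ∀ v, fderiv ℝ h (q t) v = ⟪gradient h (q t), v⟫ := by
    intro v
    rw [gradient, ← InnerProductSpace.toDual_apply_apply,
      (InnerProductSpace.toDual ℝ _).apply_symm_apply]
  rw [hc.deriv, hgrad, inner_add_right]
  set g := gradient h (q t)
  have hyoung : ⟪g, d t⟫ ≥ -((1 / (2 * β)) * ‖g‖ ^ 2 + β * D ^ 2 / 2) := by
    have h1 : ⟪g, d t⟫ ≥ -(‖g‖ * ‖d t‖) := by
      have := abs_real_inner_le_norm g (d t)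
      cases abs_le.mp this with
      | intro hl _ => linarith
    
    have hd2 : ‖d t‖ ^ 2 ≤ D ^ 2 := by
      nlinarith [hd t, norm_nonneg (d t)]
    have : ‖g‖ * ‖d t‖ ≤ (1 / (2 * β)) * ‖g‖ ^ 2 + β * D ^ 2 / 2 := by
      have key : 2 * β * (‖g‖ * ‖d t‖) ≤ ‖g‖ ^ 2 + β ^ 2 * ‖d t‖ ^ 2 := by
        nlinarith [sq_nonneg (‖g‖ - β * ‖d t‖)]
      have hb2 : (0:ℝ) < 2 * β := by linarith
      rw [← sub_nonneg]
      have : 0 ≤ (‖g‖ ^ 2 + β ^ 2 * D ^ 2 - 2 * β * (‖g‖ * ‖d t‖)) / (2 * β) := by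
        apply div_nonneg _ (le_of_lt hb2)
        nlinarith
      calc (0:ℝ) ≤ (‖g‖ ^ 2 + β ^ 2 * D ^ 2 - 2 * β * (‖g‖ * ‖d t‖)) / (2 * β) := this
        _ = (1 / (2 * β)) * ‖g‖ ^ 2 + β * D ^ 2 / 2 - ‖g‖ * ‖d t‖ := by
            field_simp
    linarith
  linarith
end

section
/- Let h : ℝⁿ → ℝ be twice continuously differentiable, q, μ : [0,∞) → ℝⁿ differentiable with q̇ = μ + d, μ̇ = ν, ‖d(t)‖ ≤ D, and let β, λ, γ > 0. Define h̄(q,μ) = ∇h(q)·μ - (1/(2β))‖∇h(q)‖² - βD²/2 + λh(q) and ℳ(q,μ) = μᵀ H_h(q) - (1/β)∇h(q)ᵀ H_h(q) + λ∇h(q)ᵀ (a row vector), where H_h is the Hessian of h. If at time t the control satisfies ∇h(q)·ν + ℳ·μ - ‖ℳ‖ D + γ h̄ ≥ 0, then (d/dt) h̄(q(t),μ(t)) ≥ -γ h̄(q(t),μ(t)). -/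
open scoped RealInnerProductSpace

theorem stmt_18 (n : ℕ)
    (h : EuclideanSpace ℝ (Fin n) → ℝ) (hsmooth : ContDiff ℝ 2 h)
    (q μ d ν : ℝ → EuclideanSpace ℝ (Fin n))
    (D β lam γ : ℝ) (hβ : 0 < β) (hlam : 0 < lam) (hγ : 0 < γ)
    (hq : ∀ t, HasDerivAt q (μ t + d t) t)
    (hμ : ∀ t, HasDerivAt μ (ν t) t)
    (hd : ∀ t, ‖d t‖ ≤ D)
    (hbar : ℝ → ℝ)
    (hbardef : ∀ s, hbar s =
      ⟪gradient h (q s), μ s⟫ - (1 / (2 * β)) * ‖gradient h (q s)‖ ^ 2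
        - β * D ^ 2 / 2 + lam * h (q s))
    (M : ℝ → EuclideanSpace ℝ (Fin n))
    (hMdef : ∀ s, M s =
      (fderiv ℝ (gradient h) (q s)) (μ s)
        - (1 / β) • (fderiv ℝ (gradient h) (q s)) (gradient h (q s))
        + lam • gradient h (q s))
    (t : ℝ)
    (hcond : ⟪gradient h (q t), ν t⟫ + ⟪M t, μ t⟫ - ‖M t‖ * D + γ * hbar t ≥ 0) :
    deriv hbar t ≥ -γ * hbar t := by
  classical
  have hgrad_eq : gradient h =
      ⇑(InnerProductSpace.toDual ℝ (EuclideanSpace ℝ (Fin n))).symm.toContinuousLinearEquiv ∘ fderiv ℝ h := rfl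
  have hfd1 : ContDiff ℝ 1 (fderiv ℝ h) := hsmooth.fderiv_right (by norm_num)
  have hgC1 : ContDiff ℝ 1 (gradient h) := by
    rw [hgrad_eq]
    exact (InnerProductSpace.toDual ℝ (EuclideanSpace ℝ (Fin n))).symm.contDiff.comp hfd1
  have hgd : DifferentiableAt ℝ (gradient h) (q t) :=
    (hgC1.differentiable one_ne_zero) (q t)
  set B := fderiv ℝ (gradient h) (q t) with hBdef
  have hB : HasFDerivAt (gradient h) B (q t) := hgd.hasFDerivAt
  -- B applied to a vector, in terms of the second derivative
  have hBv : ∀ v, B v =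
      (InnerProductSpace.toDual ℝ (EuclideanSpace ℝ (Fin n))).symm (fderiv ℝ (fderiv ℝ h) (q t) v) := by
    intro v
    rw [hBdef, hgrad_eq,
      (InnerProductSpace.toDual ℝ (EuclideanSpace ℝ (Fin n))).symm.toContinuousLinearEquiv.comp_fderiv]
    rfl
  -- symmetry of the second derivative
  have hsymm : ∀ v w : EuclideanSpace ℝ (Fin n), ⟪B v, w⟫ = ⟪B w, v⟫ := by
    have hsf : IsSymmSndFDerivAt ℝ h (q t) :=
      hsmooth.contDiffAt.isSymmSndFDerivAt (by simp [minSmoothness_of_isRCLikeNormedField])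
    intro v w
    rw [hBv, hBv, InnerProductSpace.toDual_symm_apply, InnerProductSpace.toDual_symm_apply]
    exact hsf.eq v w
  set g : EuclideanSpace ℝ (Fin n) := gradient h (q t) with hgdef
  set q' : EuclideanSpace ℝ (Fin n) := μ t + d t with hq'def
  -- derivative of s ↦ gradient h (q s)
  have hgq : HasDerivAt (fun s => gradient h (q s)) (B q') t :=
    hB.comp_hasDerivAt t (hq t)
  -- derivative of s ↦ h (q s)
  have hhd : HasGradientAt h g (q t) :=
    ((hsmooth.differentiable (by norm_num)) (q t)).hasGradientAt
  have hhq : HasDerivAt (fun s => h (q s)) (⟪g, q'⟫) t := by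
    have := hhd.hasFDerivAt.comp_hasDerivAt t (hq t)
    simpa [InnerProductSpace.toDual_apply_apply, Function.comp_def, hq'def] using this
  -- derivative of the first inner product term
  have h1 : HasDerivAt (fun s => ⟪gradient h (q s), μ s⟫)
      (⟪g, ν t⟫ + ⟪B q', μ t⟫) t := hgq.inner ℝ (hμ t)
  -- derivative of the norm-squared term
  have h2 : HasDerivAt (fun s => ‖gradient h (q s)‖ ^ 2)
      (⟪g, B q'⟫ + ⟪B q', g⟫) t := by
    have := hgq.inner ℝ hgq
    have heq : (fun s => ⟪gradient h (q s), gradient h (q s)⟫)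
        = fun s => ‖gradient h (q s)‖ ^ 2 := by
      funext s; rw [real_inner_self_eq_norm_sq]
    rwa [heq] at this
  have Hder : HasDerivAt hbar
      ((⟪g, ν t⟫ + ⟪B q', μ t⟫) - (1 / (2 * β)) * (⟪g, B q'⟫ + ⟪B q', g⟫)
        + lam * ⟪g, q'⟫) t := by
    have hbfun : hbar = fun s =>
        ⟪gradient h (q s), μ s⟫ - (1 / (2 * β)) * ‖gradient h (q s)‖ ^ 2
          - β * D ^ 2 / 2 + lam * h (q s) := funext hbardef
    rw [hbfun]
    exact ((h1.sub (h2.const_mul _)).sub_const _).add (hhq.const_mul lam)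
  rw [Hder.deriv]
  -- rewrite the derivative as ⟪g, ν⟫ + ⟪M t, q'⟫
  have hMq' : ⟪M t, q'⟫ = ⟪B q', μ t⟫ - (1 / β) * ⟪B q', g⟫ + lam * ⟪g, q'⟫ := by
    rw [hMdef t, inner_add_left, inner_sub_left, real_inner_smul_left, real_inner_smul_left,
      ← hBdef, ← hgdef, hsymm (μ t) q', hsymm g q']
  have hval : (⟪g, ν t⟫ + ⟪B q', μ t⟫) - (1 / (2 * β)) * (⟪g, B q'⟫ + ⟪B q', g⟫)
        + lam * ⟪g, q'⟫ = ⟪g, ν t⟫ + ⟪M t, q'⟫ := by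
    rw [hMq', real_inner_comm g (B q')]
    field_simp
    ring
  rw [hval]
  have hsplit : ⟪M t, q'⟫ = ⟪M t, μ t⟫ + ⟪M t, d t⟫ := by
    rw [hq'def, inner_add_right]
  have hcs : -(‖M t‖ * D) ≤ ⟪M t, d t⟫ := by
    have h1 := abs_real_inner_le_norm (M t) (d t)
    have h2 : ‖M t‖ * ‖d t‖ ≤ ‖M t‖ * D :=
      mul_le_mul_of_nonneg_left (hd t) (norm_nonneg _)
    have := neg_abs_le (⟪M t, d t⟫)
    linarith
  rw [hsplit]
  linarith
end
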